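/- Let a : ℝ → ℝ be the even function with a = 2 on (−1,1) and a = 1 on ℝ ∖ [−1,1]. Then the infimum of G(φ̂) = ∫_ℝ (a(x)(∂ₓφ̂)² + a(x)cos²φ̂) dx over all φ̂ ∈ Ḣ¹(ℝ) with φ̂(±∞) = ±π/2 equals 4, and the infimum is not attained. -/

import Mathlib

open Real MeasureTheory Filter Set Topology

section Statement6Aux

lemma cos_lip : LipschitzWith 1 Real.cos := by
  apply lipschitzWith_of_nnnorm_deriv_le Real.differentiable_cos
  intro x
  rw [Real.deriv_cos']
  rw [← NNReal.coe_le_coe, coe_nnnorm, Real.norm_eq_abs]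
  simpa using Real.abs_sin_le_one x

noncomputable def w (x : ℝ) : ℝ := if x ∈ Set.Ioo (-1:ℝ) 1 then 2 else 1

lemma w_nonneg (x : ℝ) : 1 ≤ w x := by unfold w; split <;> norm_num

lemma w_meas : Measurable w := Measurable.ite measurableSet_Ioo measurable_const measurable_const

section lower
variable {φ φ' : ℝ → ℝ}

lemma phi'_meas (hd : ∀ x, HasDerivAt φ (φ' x) x) : Measurable φ' := by
  have : φ' = deriv φ := funext fun x => ((hd x).deriv).symm
  rw [this]; exact measurable_deriv φ

lemma phi_cont (hd : ∀ x, HasDerivAt φ (φ' x) x) : Continuous φ :=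
  continuous_iff_continuousAt.2 fun x => (hd x).continuousAt

lemma g_meas (hd : ∀ x, HasDerivAt φ (φ' x) x) :
    Measurable (fun x => w x * φ' x ^ 2 + w x * cos (φ x) ^ 2) := by
  have h1 := phi'_meas hd
  have h2 := (phi_cont hd).measurable
  exact ((w_meas.mul (h1.pow_const 2)).add
    (w_meas.mul (((Real.continuous_cos.measurable.comp h2)).pow_const 2)))

lemma g_nonneg (x : ℝ) : 0 ≤ w x * φ' x ^ 2 + w x * cos (φ x) ^ 2 := by
  have := w_nonneg x; positivity

lemma g_int (hd : ∀ x, HasDerivAt φ (φ' x) x)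
    (hfin : (∫⁻ x, ENNReal.ofReal (w x * φ' x ^ 2 + w x * cos (φ x) ^ 2)) ≠ ⊤) :
    Integrable (fun x => w x * φ' x ^ 2 + w x * cos (φ x) ^ 2) := by
  refine ⟨(g_meas hd).aestronglyMeasurable, ?_⟩
  rw [hasFiniteIntegral_iff_ofReal (Eventually.of_forall g_nonneg)]
  exact hfin.lt_top

lemma h_le_g (x : ℝ) : φ' x ^ 2 + cos (φ x) ^ 2 ≤ w x * φ' x ^ 2 + w x * cos (φ x) ^ 2 := by
  have := w_nonneg x; nlinarith [sq_nonneg (φ' x), sq_nonneg (cos (φ x))]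

lemma h_int (hd : ∀ x, HasDerivAt φ (φ' x) x)
    (hg : Integrable (fun x => w x * φ' x ^ 2 + w x * cos (φ x) ^ 2)) :
    Integrable (fun x => φ' x ^ 2 + cos (φ x) ^ 2) := by
  refine hg.mono' ?_ (Eventually.of_forall fun x => ?_)
  · exact (((phi'_meas hd).pow_const 2).add
      (((Real.continuous_cos.measurable.comp (phi_cont hd).measurable)).pow_const 2)).aestronglyMeasurable
  · rw [Real.norm_eq_abs, abs_of_nonneg (by positivity)]
    exact h_le_g x

lemma p_int (hd : ∀ x, HasDerivAt φ (φ' x) x)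
    (hh : Integrable (fun x => φ' x ^ 2 + cos (φ x) ^ 2)) :
    Integrable (fun x => cos (φ x) * φ' x) := by
  refine hh.mono' ?_ (Eventually.of_forall fun x => ?_)
  · exact ((Real.continuous_cos.measurable.comp (phi_cont hd).measurable).mul
      (phi'_meas hd)).aestronglyMeasurable
  · rw [Real.norm_eq_abs, abs_mul]
    nlinarith [sq_nonneg (|cos (φ x)| - |φ' x|), abs_nonneg (cos (φ x)), abs_nonneg (φ' x),
      sq_abs (cos (φ x)), sq_abs (φ' x)]

lemma p_integral (hd : ∀ x, HasDerivAt φ (φ' x) x)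
    (ht : Tendsto φ atTop (nhds (π / 2))) (hb : Tendsto φ atBot (nhds (-(π / 2))))
    (hp : Integrable (fun x => cos (φ x) * φ' x)) :
    ∫ x, cos (φ x) * φ' x = 2 := by
  have hsd : ∀ x, HasDerivAt (fun y => sin (φ y)) (cos (φ x) * φ' x) x := fun x => (hd x).sin
  have htop : Tendsto (fun y => sin (φ y)) atTop (𝓝 1) := by
    have := (Real.continuous_sin.tendsto (π / 2)).comp ht
    simpa [Function.comp_def, Real.sin_pi_div_two] using this
  have hbot : Tendsto (fun y => sin (φ y)) atBot (𝓝 (-1)) := by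
    have := (Real.continuous_sin.tendsto (-(π / 2))).comp hb
    simpa [Function.comp_def, Real.sin_pi_div_two] using this
  have hIoi : ∫ x in Ioi (0:ℝ), cos (φ x) * φ' x = 1 - sin (φ 0) :=
    integral_Ioi_of_hasDerivAt_of_tendsto' (fun x _ => hsd x) hp.integrableOn htop
  have hIic : ∫ x in Iic (0:ℝ), cos (φ x) * φ' x = sin (φ 0) - (-1) :=
    integral_Iic_of_hasDerivAt_of_tendsto' (fun x _ => hsd x) hp.integrableOn hbot
  have := integral_add_compl (measurableSet_Iic (a := (0:ℝ))) hp
  rw [compl_Iic] at this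
  rw [← this, hIic, hIoi]; ring


lemma integral_h_ge (hd : ∀ x, HasDerivAt φ (φ' x) x)
    (ht : Tendsto φ atTop (nhds (π / 2))) (hb : Tendsto φ atBot (nhds (-(π / 2))))
    (hh : Integrable (fun x => φ' x ^ 2 + cos (φ x) ^ 2)) :
    4 ≤ ∫ x, (φ' x ^ 2 + cos (φ x) ^ 2) := by
  have hp := p_int hd hh
  have hpI := p_integral hd ht hb hp
  have h2p : ∫ x, 2 * (cos (φ x) * φ' x) = 4 := by
    rw [integral_const_mul, hpI]; norm_num
  rw [← h2p]
  refine integral_mono (hp.const_mul 2) hh (fun x => ?_)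
  nlinarith [sq_nonneg (φ' x - cos (φ x))]

lemma integral_g_ge (hd : ∀ x, HasDerivAt φ (φ' x) x)
    (ht : Tendsto φ atTop (nhds (π / 2))) (hb : Tendsto φ atBot (nhds (-(π / 2))))
    (hg : Integrable (fun x => w x * φ' x ^ 2 + w x * cos (φ x) ^ 2)) :
    4 ≤ ∫ x, (w x * φ' x ^ 2 + w x * cos (φ x) ^ 2) := by
  have hh := h_int hd hg
  refine le_trans (integral_h_ge hd ht hb hh) (integral_mono hh hg h_le_g)

lemma no_equality (hd : ∀ x, HasDerivAt φ (φ' x) x)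
    (hi : Integrable (fun x => (φ' x) ^ 2))
    (ht : Tendsto φ atTop (nhds (π / 2))) (hb : Tendsto φ atBot (nhds (-(π / 2))))
    (hg : Integrable (fun x => w x * φ' x ^ 2 + w x * cos (φ x) ^ 2))
    (heq : ∫ x, (w x * φ' x ^ 2 + w x * cos (φ x) ^ 2) = 4) : False := by
  have hmh : Measurable (fun x => φ' x ^ 2 + cos (φ x) ^ 2) :=
    ((phi'_meas hd).pow_const 2).add
      ((Real.continuous_cos.measurable.comp (phi_cont hd).measurable).pow_const 2)
  have hh := h_int hd hg
  have hp := p_int hd hh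
  have hpI := p_integral hd ht hb hp
  set k : ℝ → ℝ := fun x => if x ∈ Set.Ioo (-1:ℝ) 1 then (φ' x ^ 2 + cos (φ x) ^ 2) else 0
    with hk_def
  have hk_meas : Measurable k := Measurable.ite measurableSet_Ioo hmh measurable_const
  have hk_nonneg : ∀ x, 0 ≤ k x := by
    intro x; simp only [hk_def]; split
    · positivity
    · exact le_refl 0
  have hk_int : Integrable k := by
    refine hh.mono' hk_meas.aestronglyMeasurable (Eventually.of_forall fun x => ?_)
    rw [Real.norm_eq_abs, abs_of_nonneg (hk_nonneg x)]
    simp only [hk_def]; split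
    · exact le_refl _
    · positivity
  have hsplit : ∀ x, w x * φ' x ^ 2 + w x * cos (φ x) ^ 2
      = (φ' x ^ 2 + cos (φ x) ^ 2) + k x := by
    intro x; simp only [hk_def, w]; split <;> ring
  have hIsum : (∫ x, (φ' x ^ 2 + cos (φ x) ^ 2)) + ∫ x, k x = 4 := by
    rw [← integral_add hh hk_int, ← heq]
    exact integral_congr_ae (Eventually.of_forall fun x => (hsplit x).symm)
  have hhge := integral_h_ge hd ht hb hh
  have hknn : 0 ≤ ∫ x, k x := integral_nonneg hk_nonneg
  have hkzero : ∫ x, k x = 0 := by linarith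
  have hhfour : ∫ x, (φ' x ^ 2 + cos (φ x) ^ 2) = 4 := by linarith
  -- k = 0 a.e.
  have hk_ae : ∀ᵐ x, k x = 0 :=
    (integral_eq_zero_iff_of_nonneg hk_nonneg hk_int).1 hkzero
  -- cos (φ 0) = 0
  have hcos0 : Real.cos (φ 0) = 0 := by
    by_contra hne
    set U : Set ℝ := Set.Ioo (-1:ℝ) 1 ∩ (fun x => Real.cos (φ x)) ⁻¹' {0}ᶜ with hU_def
    have hUopen : IsOpen U := isOpen_Ioo.inter
      ((isOpen_compl_singleton).preimage (Real.continuous_cos.comp (phi_cont hd)))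
    have hUnull : volume U = 0 := by
      refine measure_mono_null ?_ (ae_iff.1 hk_ae)
      intro x hx
      simp only [Set.mem_setOf_eq, hk_def]
      rw [if_pos hx.1]
      have hc : Real.cos (φ x) ≠ 0 := hx.2
      positivity
    have : U = ∅ := hUopen.eq_empty_of_measure_zero hUnull
    have h0 : (0:ℝ) ∈ U := ⟨by norm_num, hne⟩
    simp [this] at h0
  -- φ' = cos ∘ φ a.e.
  have hsq_int : Integrable (fun x => (φ' x - cos (φ x)) ^ 2) := by
    have : (fun x => (φ' x - cos (φ x)) ^ 2)
        = fun x => (φ' x ^ 2 + cos (φ x) ^ 2) - 2 * (cos (φ x) * φ' x) := by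
      funext x; ring
    rw [this]; exact hh.sub (hp.const_mul 2)
  have hsq_zero : ∫ x, (φ' x - cos (φ x)) ^ 2 = 0 := by
    have : (fun x => (φ' x - cos (φ x)) ^ 2)
        = fun x => (φ' x ^ 2 + cos (φ x) ^ 2) - 2 * (cos (φ x) * φ' x) := by
      funext x; ring
    rw [this, integral_sub hh (hp.const_mul 2), integral_const_mul, hpI, hhfour]; ring
  have hae : ∀ᵐ x, φ' x = Real.cos (φ x) := by
    have := (integral_eq_zero_iff_of_nonneg (fun x => sq_nonneg _) hsq_int).1 hsq_zero
    filter_upwards [this] with x hx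
    have := pow_eq_zero_iff (n := 2) (by norm_num) |>.1 hx
    linarith
  -- interval integrability of φ'
  have hloc : ∀ a b : ℝ, IntervalIntegrable φ' volume a b := by
    intro a b
    rw [intervalIntegrable_iff]
    have hmaj : IntegrableOn (fun x => φ' x ^ 2 + 1) (Set.uIoc a b) :=
      hi.integrableOn.add (integrableOn_const (C := (1:ℝ)) measure_Ioc_lt_top.ne)
    refine hmaj.mono'
      ((phi'_meas hd).aestronglyMeasurable.restrict) (Eventually.of_forall fun x => ?_)
    rw [Real.norm_eq_abs]
    nlinarith [sq_nonneg (|φ' x| - 1), sq_abs (φ' x)]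
  -- FTC
  have hftc : ∀ x : ℝ, φ x = φ 0 + ∫ t in (0:ℝ)..x, Real.cos (φ t) := by
    intro x
    have h1 : ∫ t in (0:ℝ)..x, φ' t = φ x - φ 0 :=
      intervalIntegral.integral_eq_sub_of_hasDerivAt (fun t _ => hd t) (hloc 0 x)
    have h2 : ∫ t in (0:ℝ)..x, φ' t = ∫ t in (0:ℝ)..x, Real.cos (φ t) := by
      apply intervalIntegral.integral_congr_ae
      filter_upwards [hae] with t htt _ using htt
    linarith [h1, h2.symm]
  have hC1 : ∀ x, HasDerivAt φ (Real.cos (φ x)) x := by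
    intro x
    have hcont : Continuous fun t => Real.cos (φ t) :=
      Real.continuous_cos.comp (phi_cont hd)
    have := ((hcont.integral_hasStrictDerivAt 0 x).hasDerivAt).const_add (φ 0)
    exact this.congr_of_eventuallyEq (Eventually.of_forall fun y => (hftc y))
  -- ODE uniqueness
  set c : ℝ := φ 0 with hc_def
  have hconst : ∀ t : ℝ, HasDerivAt (fun _ : ℝ => c) (Real.cos c) t := by
    intro t; rw [hcos0]; exact hasDerivAt_const t c
  have hfwd : ∀ x : ℝ, 0 ≤ x → φ x = c := by
    intro x hx
    have := ODE_solution_unique (v := fun _ y => Real.cos y) (K := 1)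
      (fun _ => cos_lip) ((phi_cont hd).continuousOn)
      (fun t _ => (hC1 t).hasDerivWithinAt) (continuous_const.continuousOn)
      (fun t _ => (hconst t).hasDerivWithinAt) rfl (a := 0) (b := x)
    exact this ⟨hx, le_refl x⟩
  have hbwd : ∀ x : ℝ, x ≤ 0 → φ x = c := by
    intro x hx
    have := ODE_solution_unique_of_mem_Icc_left (v := fun _ y => Real.cos y) (K := 1)
      (s := fun _ => Set.univ)
      (fun _ _ => cos_lip.lipschitzOnWith) ((phi_cont hd).continuousOn)
      (fun t _ => (hC1 t).hasDerivWithinAt) (fun _ _ => Set.mem_univ _)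
      (continuous_const.continuousOn)
      (fun t _ => (hconst t).hasDerivWithinAt) (fun _ _ => Set.mem_univ _)
      rfl (a := x) (b := 0)
    exact this ⟨le_refl x, hx⟩
  have htc : Tendsto φ atTop (𝓝 c) := by
    apply Tendsto.congr' _ (tendsto_const_nhds (α := ℝ) (x := c))
    filter_upwards [eventually_ge_atTop (0:ℝ)] with x hx
    exact (hfwd x hx).symm
  have hbc : Tendsto φ atBot (𝓝 c) := by
    apply Tendsto.congr' _ (tendsto_const_nhds (α := ℝ) (x := c))
    filter_upwards [eventually_le_atBot (0:ℝ)] with x hx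
    exact (hbwd x hx).symm
  have h1 : c = π / 2 := tendsto_nhds_unique htc ht
  have h2 : c = -(π / 2) := tendsto_nhds_unique hbc hb
  have := Real.pi_pos
  rw [h1] at h2; linarith


end lower

namespace Kink
variable (t : ℝ)

noncomputable def φ (x : ℝ) : ℝ := π/2 - 2 * arctan (Real.exp (t - x))
noncomputable def φ' (x : ℝ) : ℝ := 2 * Real.exp (t - x) / (1 + Real.exp (t - x) ^ 2)

lemma exp_deriv (x : ℝ) : HasDerivAt (fun y => Real.exp (t - y)) (-Real.exp (t - x)) x := by
  have h : HasDerivAt (fun y : ℝ => t - y) (-1) x := (hasDerivAt_id x).const_sub t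
  simpa using h.exp

lemma phi_deriv (x : ℝ) : HasDerivAt (φ t) (φ' t x) x := by
  have h1 : HasDerivAt (fun y => arctan (Real.exp (t - y)))
      (1 / (1 + Real.exp (t - x) ^ 2) * (-Real.exp (t - x))) x :=
    (Real.hasDerivAt_arctan (Real.exp (t - x))).comp (h₂ := Real.arctan) x (exp_deriv t x)
  have h2 := (h1.const_mul 2).const_sub (π/2)
  refine h2.congr_deriv ?_
  unfold φ'
  field_simp

lemma denom_pos (x : ℝ) : (0:ℝ) < 1 + Real.exp (t - x) ^ 2 := by positivity

lemma cos_phi (x : ℝ) : Real.cos (φ t x) = φ' t x := by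
  unfold φ φ'
  rw [Real.cos_pi_div_two_sub, Real.sin_two_mul, Real.sin_arctan, Real.cos_arctan]
  have h : Real.sqrt (1 + Real.exp (t - x) ^ 2) * Real.sqrt (1 + Real.exp (t - x) ^ 2)
      = 1 + Real.exp (t - x) ^ 2 := Real.mul_self_sqrt (by positivity)
  rw [mul_assoc, div_mul_div_comm, h]
  ring

noncomputable def T (x : ℝ) : ℝ :=
  (1 - Real.exp (t - x) ^ 2) / (1 + Real.exp (t - x) ^ 2)

lemma T_deriv (x : ℝ) : HasDerivAt (T t) (φ' t x ^ 2) x := by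
  have hE := exp_deriv t x
  have hsq : HasDerivAt (fun y => Real.exp (t - y) ^ 2)
      (-2 * Real.exp (t - x) ^ 2) x := by
    have := hE.mul hE
    exact (this.congr_deriv (by ring)).congr_of_eventuallyEq
      (Eventually.of_forall fun y => by simp only [Pi.mul_apply]; ring)
  have hnum : HasDerivAt (fun y => 1 - Real.exp (t - y) ^ 2)
      (2 * Real.exp (t - x) ^ 2) x := by
    have := hsq.const_sub 1; exact this.congr_deriv (by ring)
  have hden : HasDerivAt (fun y => 1 + Real.exp (t - y) ^ 2)
      (-2 * Real.exp (t - x) ^ 2) x := by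
    have := hsq.const_add 1; convert this using 1
  have hd := hnum.div hden (ne_of_gt (denom_pos t x))
  refine hd.congr_deriv ?_
  unfold φ'
  have h0 := denom_pos t x
  field_simp
  ring

lemma tendsto_exp_top : Tendsto (fun x => Real.exp (t - x)) atTop (𝓝 0) := by
  apply Real.tendsto_exp_atBot.comp
  exact (tendsto_atBot_add_const_left atTop t tendsto_neg_atTop_atBot).congr fun x => (sub_eq_add_neg t x).symm

lemma tendsto_exp_bot : Tendsto (fun x => Real.exp (t - x)) atBot atTop := by
  apply Real.tendsto_exp_atTop.comp
  exact (tendsto_atTop_add_const_left atBot t tendsto_neg_atBot_atTop).congr fun x => (sub_eq_add_neg t x).symm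

lemma T_top : Tendsto (T t) atTop (𝓝 1) := by
  have h := tendsto_exp_top t
  have h2 : Tendsto (fun x => Real.exp (t - x) ^ 2) atTop (𝓝 0) := by
    simpa using h.pow 2
  have hnum : Tendsto (fun x => 1 - Real.exp (t - x) ^ 2) atTop (𝓝 1) := by
    simpa using tendsto_const_nhds.sub h2
  have hden : Tendsto (fun x => 1 + Real.exp (t - x) ^ 2) atTop (𝓝 1) := by
    simpa using tendsto_const_nhds.add h2
  exact (by simpa [Pi.div_def] using hnum.div hden one_ne_zero :
    Tendsto (fun x => (1 - Real.exp (t - x) ^ 2) / (1 + Real.exp (t - x) ^ 2)) atTop (𝓝 1))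

lemma T_bot : Tendsto (T t) atBot (𝓝 (-1)) := by
  have h2 : Tendsto (fun x => 1 + Real.exp (t - x) ^ 2) atBot atTop := by
    apply tendsto_atTop_add_const_left
    exact (tendsto_pow_atTop (two_ne_zero)).comp (tendsto_exp_bot t)
  have h3 : Tendsto (fun x => 2 / (1 + Real.exp (t - x) ^ 2)) atBot (𝓝 0) := by
    simpa using Tendsto.div_atTop (tendsto_const_nhds (x := (2:ℝ))) h2
  have : Tendsto (fun x => 2 / (1 + Real.exp (t - x) ^ 2) - 1) atBot (𝓝 (-1)) := by
    simpa using h3.sub_const 1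
  apply this.congr
  intro x
  have h0 := denom_pos t x
  unfold T
  field_simp
  ring

lemma phi_top : Tendsto (φ t) atTop (𝓝 (π/2)) := by
  have h : Tendsto (fun x => arctan (Real.exp (t - x))) atTop (𝓝 0) := by
    have := (Real.continuous_arctan.tendsto 0).comp (tendsto_exp_top t)
    simpa [Function.comp_def, Real.arctan_zero] using this
  have h2 : Tendsto (φ t) atTop (𝓝 (π/2 - 2*0)) := tendsto_const_nhds.sub (h.const_mul 2)
  simpa using h2

lemma phi_bot : Tendsto (φ t) atBot (𝓝 (-(π/2))) := by
  have h : Tendsto (fun x => arctan (Real.exp (t - x))) atBot (𝓝 (π/2)) :=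
    (Real.tendsto_arctan_atTop.mono_right nhdsWithin_le_nhds).comp (tendsto_exp_bot t)
  have h2 : Tendsto (fun x => π/2 - 2 * arctan (Real.exp (t - x))) atBot (𝓝 (π/2 - 2*(π/2))) :=
    tendsto_const_nhds.sub (h.const_mul 2)
  have : π/2 - 2*(π/2) = -(π/2) := by ring
  rw [this] at h2
  exact h2

lemma q_cont : Continuous (fun x => φ' t x ^ 2) := by
  apply Continuous.pow
  apply Continuous.div
  · exact continuous_const.mul (Real.continuous_exp.comp (continuous_const.sub continuous_id))
  · exact (continuous_const.add ((Real.continuous_exp.comp (continuous_const.sub continuous_id)).pow 2))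
  · exact fun x => ne_of_gt (denom_pos t x)

lemma phi'_nonneg (x : ℝ) : 0 ≤ φ' t x := by
  unfold φ'
  positivity

lemma q_bound_pos (x : ℝ) : φ' t x ^ 2 ≤ 4 * Real.exp (2*t) * Real.exp (-2 * x) := by
  have h0 := denom_pos t x
  have hEp := Real.exp_pos (t - x)
  have h1 := phi'_nonneg t x
  have h2 : φ' t x ≤ 2 * Real.exp (t - x) := by
    unfold φ'
    rw [div_le_iff₀ h0]
    nlinarith [sq_nonneg (Real.exp (t - x))]
  have hE : (Real.exp (t - x)) ^ 2 = Real.exp (2*t) * Real.exp (-2*x) := by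
    rw [sq, ← Real.exp_add, ← Real.exp_add]
    congr 1
    ring
  nlinarith

lemma q_bound_neg (x : ℝ) : φ' t x ^ 2 ≤ 4 * Real.exp (-2*t) * Real.exp (2 * x) := by
  have h0 := denom_pos t x
  have hEp := Real.exp_pos (t - x)
  have h1 := phi'_nonneg t x
  have h2 : φ' t x ≤ 2 * Real.exp (x - t) := by
    unfold φ'
    rw [div_le_iff₀ h0]
    have hxt : Real.exp (x - t) * Real.exp (t - x) = 1 := by
      rw [← Real.exp_add]; simp
    nlinarith [sq_nonneg (Real.exp (t - x)), Real.exp_pos (x - t)]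
  have hE : (Real.exp (x - t)) ^ 2 = Real.exp (-2*t) * Real.exp (2*x) := by
    rw [sq, ← Real.exp_add, ← Real.exp_add]
    congr 1
    ring
  nlinarith [Real.exp_pos (x - t)]

lemma q_int : Integrable (fun x => φ' t x ^ 2) := by
  have hIoi : IntegrableOn (fun x => φ' t x ^ 2) (Ioi (0:ℝ)) := by
    have hm : IntegrableOn (fun x => (4 * Real.exp (2*t)) * Real.exp (-2 * x)) (Ioi (0:ℝ)) :=
      (exp_neg_integrableOn_Ioi 0 (by norm_num : (0:ℝ) < 2)).const_mul (4 * Real.exp (2*t))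
    refine hm.mono' ((q_cont t).aestronglyMeasurable.restrict)
      (Eventually.of_forall fun x => ?_)
    rw [Real.norm_eq_abs, abs_of_nonneg (sq_nonneg _)]
    have := q_bound_pos t x
    linarith
  have hIic : IntegrableOn (fun x => φ' t x ^ 2) (Iic (0:ℝ)) := by
    have hm : IntegrableOn (fun x => (4 * Real.exp (-2*t)) * Real.exp x) (Iic (0:ℝ)) :=
      (integrableOn_exp_Iic 0).const_mul (4 * Real.exp (-2*t))
    refine hm.mono' ((q_cont t).aestronglyMeasurable.restrict) ?_
    filter_upwards [ae_restrict_mem measurableSet_Iic] with x hx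
    rw [Real.norm_eq_abs, abs_of_nonneg (sq_nonneg _)]
    have h1 := q_bound_neg t x
    have h2 : Real.exp (2*x) ≤ Real.exp x := Real.exp_le_exp.2 (by simpa using by linarith [mem_Iic.1 hx] : 2*x ≤ x)
    nlinarith [Real.exp_pos (-2*t)]
  have hu := hIic.union hIoi
  rw [Iic_union_Ioi] at hu
  exact integrableOn_univ.1 hu

lemma q_integral : ∫ x, φ' t x ^ 2 = 2 := by
  have hIoi : ∫ x in Ioi (0:ℝ), φ' t x ^ 2 = 1 - T t 0 :=
    integral_Ioi_of_hasDerivAt_of_tendsto' (fun x _ => T_deriv t x)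
      (q_int t).integrableOn (T_top t)
  have hIic : ∫ x in Iic (0:ℝ), φ' t x ^ 2 = T t 0 - (-1) :=
    integral_Iic_of_hasDerivAt_of_tendsto' (fun x _ => T_deriv t x)
      (q_int t).integrableOn (T_bot t)
  have := integral_add_compl (measurableSet_Iic (a := (0:ℝ))) (q_int t)
  rw [compl_Iic] at this
  rw [← this, hIic, hIoi]; ring

lemma g_eq (x : ℝ) : w x * φ' t x ^ 2 + w x * Real.cos (φ t x) ^ 2
    = 2 * φ' t x ^ 2 + (if x ∈ Set.Ioo (-1:ℝ) 1 then 2 * φ' t x ^ 2 else 0) := by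
  rw [cos_phi]; unfold w; split <;> ring

lemma k_int : Integrable (fun x => if x ∈ Set.Ioo (-1:ℝ) 1 then 2 * φ' t x ^ 2 else 0) := by
  refine ((q_int t).const_mul 2).mono'
    (Measurable.ite measurableSet_Ioo ((q_cont t).measurable.const_mul 2)
      measurable_const).aestronglyMeasurable
    (Eventually.of_forall fun x => ?_)
  rw [Real.norm_eq_abs]
  split
  · rw [abs_of_nonneg (by positivity)]
  · rw [abs_zero]; positivity

lemma g_int : Integrable (fun x => w x * φ' t x ^ 2 + w x * Real.cos (φ t x) ^ 2) := by
  have : (fun x => w x * φ' t x ^ 2 + w x * Real.cos (φ t x) ^ 2)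
      = fun x => 2 * φ' t x ^ 2 + (if x ∈ Set.Ioo (-1:ℝ) 1 then 2 * φ' t x ^ 2 else 0) := by
    funext x; exact g_eq t x
  rw [this]
  exact ((q_int t).const_mul 2).add (k_int t)

lemma k_integral_le (ht2 : 2 ≤ t) :
    ∫ x, (if x ∈ Set.Ioo (-1:ℝ) 1 then 2 * φ' t x ^ 2 else 0) ≤ 16 * Real.exp (2*(1-t)) := by
  have hind : (fun x => if x ∈ Set.Ioo (-1:ℝ) 1 then 2 * φ' t x ^ 2 else 0)
      = Set.indicator (Set.Ioo (-1:ℝ) 1) (fun x => 2 * φ' t x ^ 2) := by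
    funext x; rw [Set.indicator_apply]
  rw [hind, integral_indicator measurableSet_Ioo]
  have hvol : volume (Set.Ioo (-1:ℝ) 1) < ⊤ := measure_Ioo_lt_top
  have hC : ∀ x ∈ Set.Ioo (-1:ℝ) 1, ‖2 * φ' t x ^ 2‖ ≤ 8 * Real.exp (2*(1-t)) := by
    intro x hx
    rw [Real.norm_eq_abs, abs_of_nonneg (by positivity)]
    have h1 := q_bound_neg t x
    have h2 : Real.exp (2*x) ≤ Real.exp 2 := Real.exp_le_exp.2 (by nlinarith [hx.2])
    have h3 : Real.exp (-2*t) * Real.exp 2 = Real.exp (2*(1-t)) := by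
      rw [← Real.exp_add]; congr 1; ring
    nlinarith [Real.exp_pos (-2*t), Real.exp_pos (2*x)]
  have hb := norm_setIntegral_le_of_norm_le_const hvol hC
  have hle : (∫ x in Set.Ioo (-1:ℝ) 1, 2 * φ' t x ^ 2)
      ≤ 8 * Real.exp (2*(1-t)) * (volume (Set.Ioo (-1:ℝ) 1)).toReal :=
    (le_abs_self _).trans (Real.norm_eq_abs _ ▸ hb)
  have hvol2 : (volume (Set.Ioo (-1:ℝ) 1)).toReal = 2 := by
    rw [Real.volume_Ioo]
    rw [ENNReal.toReal_ofReal (by norm_num)]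
    norm_num
  rw [hvol2] at hle
  linarith

lemma energy_le (ht2 : 2 ≤ t) :
    ∫ x, (w x * φ' t x ^ 2 + w x * Real.cos (φ t x) ^ 2) ≤ 4 + 16 * Real.exp (2*(1-t)) := by
  have : (∫ x, (w x * φ' t x ^ 2 + w x * Real.cos (φ t x) ^ 2))
      = (∫ x, 2 * φ' t x ^ 2) + ∫ x, (if x ∈ Set.Ioo (-1:ℝ) 1 then 2 * φ' t x ^ 2 else 0) := by
    rw [← integral_add ((q_int t).const_mul 2) (k_int t)]
    exact integral_congr_ae (Eventually.of_forall fun x => g_eq t x)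
  rw [this, integral_const_mul, q_integral]
  have := k_integral_le t ht2
  linarith

end Kink

end Statement6Aux

/-- For the step weight `a = 2` on `(−1,1)`, `a = 1` elsewhere, the infimum of the
weighted pendulum energy over `Ḣ¹` profiles connecting `−π/2` to `π/2` equals `4`
and is not attained. -/
theorem statement6 :
    sInf {E : ENNReal | ∃ φ φ' : ℝ → ℝ,
        (∀ x, HasDerivAt φ (φ' x) x) ∧
        Integrable (fun x => (φ' x) ^ 2) ∧
        Tendsto φ atTop (nhds (π / 2)) ∧
        Tendsto φ atBot (nhds (-(π / 2))) ∧
        E = ∫⁻ x, ENNReal.ofReal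
          ((if x ∈ Set.Ioo (-1 : ℝ) 1 then (2 : ℝ) else 1) * (φ' x) ^ 2
            + (if x ∈ Set.Ioo (-1 : ℝ) 1 then (2 : ℝ) else 1) * Real.cos (φ x) ^ 2)} = 4 ∧
    (4 : ENNReal) ∉ {E : ENNReal | ∃ φ φ' : ℝ → ℝ,
        (∀ x, HasDerivAt φ (φ' x) x) ∧
        Integrable (fun x => (φ' x) ^ 2) ∧
        Tendsto φ atTop (nhds (π / 2)) ∧
        Tendsto φ atBot (nhds (-(π / 2))) ∧
        E = ∫⁻ x, ENNReal.ofReal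
          ((if x ∈ Set.Ioo (-1 : ℝ) 1 then (2 : ℝ) else 1) * (φ' x) ^ 2
            + (if x ∈ Set.Ioo (-1 : ℝ) 1 then (2 : ℝ) else 1) * Real.cos (φ x) ^ 2)} := by
  set S : Set ENNReal := {E : ENNReal | ∃ φ φ' : ℝ → ℝ,
        (∀ x, HasDerivAt φ (φ' x) x) ∧
        Integrable (fun x => (φ' x) ^ 2) ∧
        Tendsto φ atTop (nhds (π / 2)) ∧
        Tendsto φ atBot (nhds (-(π / 2))) ∧
        E = ∫⁻ x, ENNReal.ofReal
          ((if x ∈ Set.Ioo (-1 : ℝ) 1 then (2 : ℝ) else 1) * (φ' x) ^ 2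
            + (if x ∈ Set.Ioo (-1 : ℝ) 1 then (2 : ℝ) else 1) * Real.cos (φ x) ^ 2)} with hS
  have hofReal4 : (4:ENNReal) = ENNReal.ofReal (4:ℝ) := by norm_num
  -- lower bound for any member
  have hlow : ∀ E ∈ S, (4:ENNReal) ≤ E := by
    rintro E ⟨φ, φ', hd, hi, ht, hb, heq⟩
    have heq' : E = ∫⁻ x, ENNReal.ofReal (w x * φ' x ^ 2 + w x * Real.cos (φ x) ^ 2) := heq
    by_cases hE : E = ⊤
    · rw [hE]; exact le_top
    · have hfin : (∫⁻ x, ENNReal.ofReal (w x * φ' x ^ 2 + w x * Real.cos (φ x) ^ 2)) ≠ ⊤ := by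
        rw [← heq']; exact hE
      have hg := g_int hd hfin
      have hof := ofReal_integral_eq_lintegral_ofReal hg (Eventually.of_forall g_nonneg)
      rw [heq', ← hof, hofReal4]
      exact ENNReal.ofReal_le_ofReal (integral_g_ge hd ht hb hg)
  -- non-attainment
  have hnotmem : (4:ENNReal) ∉ S := by
    rintro ⟨φ, φ', hd, hi, ht, hb, heq⟩
    have heq' : (4:ENNReal) = ∫⁻ x, ENNReal.ofReal (w x * φ' x ^ 2 + w x * Real.cos (φ x) ^ 2) :=
      heq
    have hfin : (∫⁻ x, ENNReal.ofReal (w x * φ' x ^ 2 + w x * Real.cos (φ x) ^ 2)) ≠ ⊤ := by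
      rw [← heq']; exact (by norm_num : (4:ENNReal) ≠ ⊤)
    have hg := g_int hd hfin
    have hof := ofReal_integral_eq_lintegral_ofReal hg (Eventually.of_forall g_nonneg)
    have h4 : ENNReal.ofReal (∫ x, (w x * φ' x ^ 2 + w x * Real.cos (φ x) ^ 2))
        = ENNReal.ofReal (4:ℝ) := by rw [hof, ← heq', hofReal4]
    have hnn : 0 ≤ ∫ x, (w x * φ' x ^ 2 + w x * Real.cos (φ x) ^ 2) :=
      integral_nonneg g_nonneg
    have := (ENNReal.ofReal_eq_ofReal_iff hnn (by norm_num)).1 h4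
    exact no_equality hd hi ht hb hg this
  -- upper bound
  have hup : sInf S ≤ 4 := by
    apply ENNReal.le_of_forall_pos_le_add
    intro ε hε _
    have hεR : (0:ℝ) < ε := hε
    set t : ℝ := max 2 ((2 - Real.log (ε/16))/2 + 1) with htdef
    have ht2 : 2 ≤ t := le_max_left _ _
    have hexp : 16 * Real.exp (2*(1-t)) ≤ ε := by
      have h1 : (2 - Real.log (ε/16))/2 + 1 ≤ t := le_max_right _ _
      have h2 : 2*(1-t) ≤ Real.log (ε/16) := by linarith
      have h3 : Real.exp (2*(1-t)) ≤ ε/16 := by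
        calc Real.exp (2*(1-t)) ≤ Real.exp (Real.log (ε/16)) := Real.exp_le_exp.2 h2
        _ = ε/16 := Real.exp_log (by positivity)
      linarith
    have hmem : (∫⁻ x, ENNReal.ofReal
          ((if x ∈ Set.Ioo (-1 : ℝ) 1 then (2 : ℝ) else 1) * (Kink.φ' t x) ^ 2
            + (if x ∈ Set.Ioo (-1 : ℝ) 1 then (2 : ℝ) else 1) * Real.cos (Kink.φ t x) ^ 2)) ∈ S :=
      ⟨Kink.φ t, Kink.φ' t, Kink.phi_deriv t, Kink.q_int t, Kink.phi_top t, Kink.phi_bot t, rfl⟩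
    have hof := ofReal_integral_eq_lintegral_ofReal (Kink.g_int t) (Eventually.of_forall g_nonneg)
    calc sInf S ≤ _ := sInf_le hmem
      _ = ENNReal.ofReal (∫ x, (w x * Kink.φ' t x ^ 2 + w x * Real.cos (Kink.φ t x) ^ 2)) :=
        hof.symm
      _ ≤ ENNReal.ofReal (4 + (ε:ℝ)) := by
        apply ENNReal.ofReal_le_ofReal
        have := Kink.energy_le t ht2
        linarith
      _ = 4 + (ε:ENNReal) := by
        rw [ENNReal.ofReal_add (by norm_num) (le_of_lt hεR), ENNReal.ofReal_coe_nnreal,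
          ← hofReal4]
  exact ⟨le_antisymm hup (le_sInf hlow), hnotmem⟩
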